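/- Suppose A is closed under finite unions and [X]^{<ω} ⊆ A ⊆ Z. Then the space (A, τ_A[Z]) is crowded (has no isolated points) if and only if X ∉ Z. -/

import Mathlib

open Set

/-- The basic set `B_{x,z} = {y ∈ A : x ⊆ y ⊆ X \\ z}`. -/
def BSet {X : Type*} (A : Set (Set X)) (x z : Set X) : Set ↥A :=
  {y : ↥A | x ⊆ (y : Set X) ∧ (y : Set X) ∩ z = ∅}

/-- The topology `τ_A[Z]` on `A`, generated by the sets `B_{x,z}` for `x ∈ A`,
`z ∈ Z` with `x ∩ z = ∅`. -/
def tau {X : Type*} (A Z : Set (Set X)) : TopologicalSpace ↥A :=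
  TopologicalSpace.generateFrom
    {S | ∃ x ∈ A, ∃ z ∈ Z, x ∩ z = ∅ ∧ S = BSet A x z}

/-- If `A` is closed under finite unions and `[X]^{<ω} ⊆ A ⊆ Z`, then
`(A, τ_A[Z])` is crowded (has no isolated points) iff `X ∉ Z`. -/
theorem tau_crowded_iff {X : Type*} [Infinite X] (A Z : Set (Set X))
    (hZfin : ∀ s : Set X, s.Finite → s ∈ Z)
    (hZun : ∀ s ∈ Z, ∀ t ∈ Z, s ∪ t ∈ Z)
    (hAfin : ∀ s : Set X, s.Finite → s ∈ A)
    (hAun : ∀ s ∈ A, ∀ t ∈ A, s ∪ t ∈ A)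
    (hAZ : A ⊆ Z)
    [t : TopologicalSpace ↥A] (ht : t = tau A Z) :
    (∀ x : ↥A, ¬ IsOpen ({x} : Set ↥A)) ↔ (Set.univ : Set X) ∉ Z := by
  subst ht
  set s : Set (Set ↥A) := {S | ∃ x ∈ A, ∃ z ∈ Z, x ∩ z = ∅ ∧ S = BSet A x z} with hs
  constructor
  · intro h hX
    apply h ⟨∅, hAfin ∅ finite_empty⟩
    have heq : ({(⟨∅, hAfin ∅ finite_empty⟩ : ↥A)} : Set ↥A) = BSet A ∅ univ := by
      ext w
      simp [BSet, Subtype.ext_iff, eq_comm]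
    rw [heq]
    exact TopologicalSpace.isOpen_generateFrom_of_mem
      ⟨∅, hAfin ∅ finite_empty, univ, hX, by simp, rfl⟩
  · intro hX y hy
    letI : TopologicalSpace ↥A := tau A Z
    have hb := @TopologicalSpace.isTopologicalBasis_of_subbasis _ (tau A Z) s rfl
    obtain ⟨v, hv, hyv, hvy⟩ := hb.exists_subset_of_mem_open (mem_singleton y) hy
    obtain ⟨f, ⟨hffin, hfs⟩, rfl⟩ := hv
    have key : ∀ f : Set (Set ↥A), f.Finite → f ⊆ s → y ∈ ⋂₀ f →
        ∃ c ∈ Z, (y : Set X) ∩ c = ∅ ∧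
          ∀ w : ↥A, (y : Set X) ⊆ (w : Set X) → (w : Set X) ∩ c = ∅ → w ∈ ⋂₀ f := by
      intro f hffin
      refine Set.Finite.induction_on
        (motive := fun f _ => f ⊆ s → y ∈ ⋂₀ f → ∃ c ∈ Z, (y : Set X) ∩ c = ∅ ∧
          ∀ w : ↥A, (y : Set X) ⊆ (w : Set X) → (w : Set X) ∩ c = ∅ → w ∈ ⋂₀ f)
        f hffin (fun _ _ => ⟨∅, hZfin ∅ finite_empty, by simp, by simp⟩) ?_
      intro B f hB hffin ih hfs hyf
      obtain ⟨x, hxA, z, hzZ, hxz, rfl⟩ : B ∈ s := hfs (mem_insert _ _)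
      have hyB : y ∈ BSet A x z := mem_sInter.mp hyf _ (mem_insert _ _)
      obtain ⟨c, hcZ, hyc, hc⟩ := ih (fun S hS => hfs (mem_insert_of_mem _ hS))
        (mem_sInter.mpr fun S hS => mem_sInter.mp hyf _ (mem_insert_of_mem _ hS))
      refine ⟨z ∪ c, hZun z hzZ c hcZ, ?_, ?_⟩
      · rw [inter_union_distrib_left, hyB.2, hyc, union_empty]
      · intro w hyw hwzc
        rw [inter_union_distrib_left, union_empty_iff] at hwzc
        rw [mem_sInter]
        intro S hS
        rcases hS with rfl | hS
        · exact ⟨hyB.1.trans hyw, hwzc.1⟩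
        · exact mem_sInter.mp (hc w hyw hwzc.2) S hS
    obtain ⟨c, hcZ, hyc, hc⟩ := key f hffin hfs hyv
    have hyZ : (y : Set X) ∪ c ∈ Z := hZun _ (hAZ y.2) c hcZ
    have hne : (y : Set X) ∪ c ≠ univ := fun h => hX (h ▸ hyZ)
    obtain ⟨p, hp⟩ := (ne_univ_iff_exists_notMem _).mp hne
    have hpy : p ∉ (y : Set X) := fun h => hp (mem_union_left _ h)
    have hpc : p ∉ c := fun h => hp (mem_union_right _ h)
    set w : ↥A := ⟨(y : Set X) ∪ {p},
      hAun _ y.2 {p} (hAfin _ (finite_singleton p))⟩ with hw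
    have hwf : w ∈ ⋂₀ f := by
      apply hc
      · exact subset_union_left
      · rw [hw]
        simp only [union_inter_distrib_right, hyc, empty_union,
          singleton_inter_eq_empty]
        exact hpc
    have : w = y := hvy hwf
    apply hpy
    have : (w : Set X) = (y : Set X) := congrArg _ this
    rw [← this, hw]
    exact mem_union_right _ rfl
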